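/- For any odd prime p, any nonnegative integer r, and any ε ∈ {−1,1}, Σ_{k=0}^{p-1} (2k+1)^{2r+1}·ε^k·S_k ≡ 1 (mod p), where S_k is the k-th large Schröder number. -/

import Mathlib

open Finset

/-- Large Schröder number `S_n`. -/
noncomputable def schroederNum (n : ℕ) : ℚ :=
  ∑ k ∈ Finset.range (n + 1), (n.choose k : ℚ) * ((n + k).choose k : ℚ) / (k + 1)

lemma fact_mul_choose_int (n b : ℕ) :
    ((b.factorial : ℤ) * n.choose b) = ∏ i ∈ Finset.range b, ((n : ℤ) - i) := by
  induction b with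
  | zero => simp
  | succ b ih =>
    rw [Finset.prod_range_succ, ← ih]
    rcases lt_or_ge n b with h | h
    · rw [Nat.choose_eq_zero_of_lt h, Nat.choose_eq_zero_of_lt (Nat.lt_succ_of_lt h)]
      simp
    · have h2 := Nat.choose_succ_right_eq n b
      have h3 : ((n.choose (b+1) : ℤ)) * (b+1) = (n.choose b : ℤ) * ((n:ℤ) - b) := by
        have h4 := congrArg (fun t : ℕ => (t : ℤ)) h2
        push_cast [Nat.cast_sub h] at h4
        simpa using h4
      push_cast [Nat.factorial_succ]
      linear_combination (b.factorial : ℤ) * h3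

lemma fact_mul_choose_zmod (p n b : ℕ) :
    ((b.factorial : ZMod p) * n.choose b) = ∏ i ∈ Finset.range b, ((n : ZMod p) - i) := by
  have h := congrArg (fun t : ℤ => (t : ZMod p)) (fact_mul_choose_int n b)
  push_cast at h
  simpa using h

lemma fact_ne_zero_zmod {p : ℕ} (hp : p.Prime) {b : ℕ} (hb : b < p) :
    ((b.factorial : ZMod p)) ≠ 0 := by
  rw [Ne, ZMod.natCast_eq_zero_iff, Nat.Prime.dvd_factorial hp]
  omega

lemma choose_reflect {p : ℕ} (hp : p.Prime) {j k : ℕ} (h2j : 2 * j < p) (hk : k < p) :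
    (((p - 1 - k + j).choose (2 * j) : ZMod p)) = ((k + j).choose (2 * j) : ZMod p) := by
  haveI : Fact p.Prime := ⟨hp⟩
  have hfac := fact_ne_zero_zmod hp h2j
  apply mul_left_cancel₀ hfac
  rw [fact_mul_choose_zmod, fact_mul_choose_zmod]
  have hk1 : k ≤ p - 1 := by omega
  have hcast : ((p - 1 - k + j : ℕ) : ZMod p) = (j : ZMod p) - k - 1 := by
    push_cast [Nat.cast_sub hk1, Nat.cast_sub (Nat.one_le_iff_ne_zero.2 hp.pos.ne')]
    rw [ZMod.natCast_self]
    ring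
  rw [hcast]
  have hrefl := Finset.prod_range_reflect (fun i => ((k : ZMod p) + j - i)) (2 * j)
  simp only [Nat.cast_add]
  calc ∏ i ∈ Finset.range (2*j), ((j:ZMod p) - k - 1 - i)
      = ∏ i ∈ Finset.range (2*j), (-1) * (((k:ZMod p) + j) - ((2*j-1-i : ℕ) : ZMod p)) := by
        apply Finset.prod_congr rfl
        intro i hi
        rw [Finset.mem_range] at hi
        have : ((2 * j - 1 - i : ℕ) : ZMod p) = 2 * (j:ZMod p) - 1 - i := by
          push_cast [Nat.cast_sub (by omega : i ≤ 2 * j - 1), Nat.cast_sub (by omega : 1 ≤ 2 * j)]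
          ring
        rw [this]; ring
    _ = (-1)^(2*j) * ∏ i ∈ Finset.range (2*j), (((k:ZMod p) + j) - ((2*j-1-i : ℕ) : ZMod p)) := by
        rw [Finset.prod_mul_distrib, Finset.prod_const, Finset.card_range]
    _ = ∏ i ∈ Finset.range (2*j), ((k:ZMod p) + j - (i : ZMod p)) := by
        rw [hrefl, pow_mul]
        simp

lemma catalan_zmod_zero {p : ℕ} (hp : p.Prime) {j : ℕ} (hpj : p ≤ 2 * j) (hj : j + 1 < p) :
    ((catalan j : ZMod p)) = 0 := by
  haveI : Fact p.Prime := ⟨hp⟩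
  have hcb : ((2 * j).choose j : ZMod p) = 0 := by
    have hfac := fact_ne_zero_zmod hp (by omega : j < p)
    have h := fact_mul_choose_zmod p (2 * j) j
    have hzero : (∏ i ∈ Finset.range j, (((2 * j : ℕ) : ZMod p) - (i : ZMod p))) = 0 := by
      apply Finset.prod_eq_zero (Finset.mem_range.2 (by omega : 2 * j - p < j))
      have : ((2 * j - p : ℕ) : ZMod p) = ((2 * j : ℕ) : ZMod p) := by
        push_cast [Nat.cast_sub hpj, ZMod.natCast_self]
        ring
      rw [this, sub_self]
    rw [hzero] at h
    exact (mul_eq_zero.1 h).resolve_left hfac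
  have hid : ((j + 1 : ℕ) : ZMod p) * (catalan j : ZMod p) = ((2 * j).choose j : ZMod p) := by
    have := congrArg (fun t : ℕ => (t : ZMod p)) (succ_mul_catalan_eq_centralBinom j)
    push_cast at this
    rw [Nat.centralBinom] at this
    push_cast at this ⊢
    exact this
  have hj1 : ((j + 1 : ℕ) : ZMod p) ≠ 0 := by
    rw [Ne, ZMod.natCast_eq_zero_iff]
    intro hdvd
    have := Nat.le_of_dvd (by omega) hdvd
    omega
  rw [hcb, mul_eq_zero] at hid
  exact hid.resolve_left hj1

lemma catalan_pred_zmod {p : ℕ} (hp : p.Prime) (hodd : Odd p) :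
    ((catalan (p - 1) : ZMod p)) = -1 := by
  haveI : Fact p.Prime := ⟨hp⟩
  have hp0 : 1 ≤ p := hp.one_le
  have hp1 : p - 1 + 1 = p := Nat.succ_pred_eq_of_pos hp.pos
  -- centralBinom p = 2 * (2*(p-1)+1) * catalan (p-1)
  have keynat : Nat.centralBinom p = 2 * (2 * (p - 1) + 1) * catalan (p - 1) := by
    have h1 := Nat.succ_mul_centralBinom_succ (p - 1)
    rw [hp1] at h1
    have h2 : Nat.centralBinom (p - 1) = p * catalan (p - 1) := by
      rw [← succ_mul_catalan_eq_centralBinom, hp1]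
    rw [h2] at h1
    apply Nat.eq_of_mul_eq_mul_left hp.pos
    rw [h1]; ring
  -- C(2p-1, p-1) ≡ 1 mod p
  have hC : (((2 * p - 1).choose (p - 1) : ZMod p)) = 1 := by
    have hfac := fact_ne_zero_zmod hp (by omega : p - 1 < p)
    apply mul_left_cancel₀ hfac
    rw [fact_mul_choose_zmod, mul_one]
    have hfact : ((p - 1).factorial : ZMod p) = ∏ i ∈ Finset.range (p - 1), ((i : ZMod p) + 1) := by
      rw [← Finset.prod_range_add_one_eq_factorial]
      push_cast
      rfl
    rw [hfact]
    have hterm : ∀ i ∈ Finset.range (p - 1),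
        (((2 * p - 1 : ℕ) : ZMod p) - (i : ZMod p)) = (-1) * ((i : ZMod p) + 1) := by
      intro i _
      have : ((2 * p - 1 : ℕ) : ZMod p) = -1 := by
        push_cast [Nat.cast_sub (by omega : 1 ≤ 2 * p), ZMod.natCast_self]
        ring
      rw [this]; ring
    rw [Finset.prod_congr rfl hterm, Finset.prod_mul_distrib, Finset.prod_const,
      Finset.card_range]
    have hev : Even (p - 1) := Nat.Odd.sub_odd hodd odd_one
    rw [hev.neg_one_pow, one_mul]
  -- centralBinom p ≡ 2
  have hcb2 : ((Nat.centralBinom p : ZMod p)) = 2 := by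
    have : Nat.centralBinom p = 2 * (2 * p - 1).choose (p - 1) := by
      have hs := Nat.choose_succ_succ (2 * p - 1) (p - 1)
      simp only [Nat.succ_eq_add_one] at hs
      rw [hp1] at hs
      rw [show 2 * p - 1 + 1 = 2 * p by omega] at hs
      have hsym : (2 * p - 1).choose p = (2 * p - 1).choose (p - 1) := by
        have h6 := Nat.choose_symm (by omega : p ≤ 2 * p - 1)
        rw [show 2 * p - 1 - p = p - 1 by omega] at h6
        exact h6.symm
      rw [Nat.centralBinom, hs, hsym]; ring
    rw [this]
    push_cast [hC]
    ring
  -- combine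
  have := congrArg (fun t : ℕ => (t : ZMod p)) keynat
  push_cast [Nat.cast_sub hp.one_le, ZMod.natCast_self] at this
  rw [hcb2] at this
  have h2ne : (2 : ZMod p) ≠ 0 := by
    have : ((2 : ℕ) : ZMod p) ≠ 0 := by
      rw [Ne, ZMod.natCast_eq_zero_iff]
      intro h
      have h7 := Nat.le_of_dvd (by norm_num) h
      have h8 := hp.two_le
      rcases hodd with ⟨c, hc⟩
      omega
    simpa using this
  -- this : 2 = 2 * (2*(0-1)+1) * catalan (p-1)  i.e. 2 = -2 * catalan
  have hfin : (2 : ZMod p) * (catalan (p - 1) : ZMod p) = 2 * (-1) := by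
    linear_combination this
  exact mul_left_cancel₀ h2ne hfin

lemma inner_sum_zero {p : ℕ} (hp : p.Prime) (hodd : Odd p) (r j : ℕ) (e : ZMod p)
    (he : e ^ 2 = 1) (h2j : 2 * j < p) :
    ∑ k ∈ Finset.range p,
      (2 * (k : ZMod p) + 1) ^ (2 * r + 1) * e ^ k * ((k + j).choose (2 * j) : ZMod p) = 0 := by
  haveI : Fact p.Prime := ⟨hp⟩
  have hp0 : 1 ≤ p := hp.one_le
  set f : ℕ → ZMod p :=
    fun k => (2 * (k : ZMod p) + 1) ^ (2 * r + 1) * e ^ k * ((k + j).choose (2 * j) : ZMod p)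
    with hf
  have hstep : ∀ k, k < p → f (p - 1 - k) = - f k := by
    intro k hk
    have hk1 : k ≤ p - 1 := by omega
    have c1 : (2 * ((p - 1 - k : ℕ) : ZMod p) + 1) = -(2 * (k : ZMod p) + 1) := by
      push_cast [Nat.cast_sub (by omega : k ≤ p - 1), Nat.cast_sub hp0, ZMod.natCast_self]
      ring
    have c2 : e ^ (p - 1 - k) = e ^ k := by
      have hek : e ^ k * e ^ k = 1 := by
        rw [← pow_add, ← two_mul, pow_mul, he, one_pow]
      have hepk : e ^ (p - 1 - k) * e ^ k = 1 := by
        rw [← pow_add, Nat.sub_add_cancel hk1]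
        obtain ⟨c, hc⟩ := hodd
        rw [show p - 1 = 2 * c by omega, pow_mul, he, one_pow]
      calc e ^ (p - 1 - k) = e ^ (p - 1 - k) * (e ^ k * e ^ k) := by rw [hek, mul_one]
        _ = (e ^ (p - 1 - k) * e ^ k) * e ^ k := by ring
        _ = e ^ k := by rw [hepk, one_mul]
    have c3 : (((p - 1 - k + j).choose (2 * j) : ZMod p)) = ((k + j).choose (2 * j) : ZMod p) :=
      choose_reflect hp h2j hk
    rw [hf]
    simp only
    rw [c1, c2, c3, Odd.neg_pow ⟨r, by ring⟩]
    ring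
  have hrefl := Finset.sum_range_reflect f p
  have h2 : ∑ k ∈ Finset.range p, f k = - ∑ k ∈ Finset.range p, f k := by
    nth_rewrite 1 [← hrefl]
    rw [← Finset.sum_neg_distrib]
    apply Finset.sum_congr rfl
    intro k hk
    rw [Finset.mem_range] at hk
    exact hstep k hk
  have h2ne : (2 : ZMod p) ≠ 0 := by
    have h9 : ((2 : ℕ) : ZMod p) ≠ 0 := by
      rw [Ne, ZMod.natCast_eq_zero_iff]
      intro h
      have h7 := Nat.le_of_dvd (by norm_num) h
      have h8 := hp.two_le
      rcases hodd with ⟨c, hc⟩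
      omega
    simpa using h9
  have h3 : (2 : ZMod p) * ∑ k ∈ Finset.range p, f k = 0 := by
    rw [two_mul]
    nth_rewrite 1 [h2]
    ring
  rcases mul_eq_zero.1 h3 with h | h
  · exact absurd h h2ne
  · exact h

lemma main_zmod {p : ℕ} (hp : p.Prime) (hodd : Odd p) (r : ℕ) (e : ZMod p) (he : e ^ 2 = 1) :
    ∑ k ∈ Finset.range p, (2 * (k : ZMod p) + 1) ^ (2 * r + 1) * e ^ k *
      (∑ j ∈ Finset.range p, ((k + j).choose (2 * j) : ZMod p) * (catalan j : ZMod p)) = 1 := by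
  haveI : Fact p.Prime := ⟨hp⟩
  have hp0 : 1 ≤ p := hp.one_le
  have step1 : ∀ k ∈ Finset.range p, (2 * (k : ZMod p) + 1) ^ (2 * r + 1) * e ^ k *
      (∑ j ∈ Finset.range p, ((k + j).choose (2 * j) : ZMod p) * (catalan j : ZMod p))
      = ∑ j ∈ Finset.range p, (2 * (k : ZMod p) + 1) ^ (2 * r + 1) * e ^ k *
          ((k + j).choose (2 * j) : ZMod p) * (catalan j : ZMod p) := by
    intro k _
    rw [Finset.mul_sum]
    apply Finset.sum_congr rfl
    intro j _
    ring
  rw [Finset.sum_congr rfl step1, Finset.sum_comm]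
  have hr : Finset.range p = Finset.range ((p - 1) + 1) := by
    congr 1; omega
  rw [hr, Finset.sum_range_succ]
  have hmain : ∑ j ∈ Finset.range (p - 1), ∑ k ∈ Finset.range (p - 1 + 1),
      (2 * (k : ZMod p) + 1) ^ (2 * r + 1) * e ^ k *
        ((k + j).choose (2 * j) : ZMod p) * (catalan j : ZMod p) = 0 := by
    apply Finset.sum_eq_zero
    intro j hj
    rw [Finset.mem_range] at hj
    rw [← Finset.sum_mul, ← hr]
    rcases lt_or_ge (2 * j) p with h | h
    · rw [inner_sum_zero hp hodd r j e he h, zero_mul]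
    · rw [catalan_zmod_zero hp h (by omega), mul_zero]
  rw [hmain, zero_add]
  -- the j = p - 1 term
  rw [Finset.sum_range_succ]
  have hzero : ∑ k ∈ Finset.range (p - 1),
      (2 * (k : ZMod p) + 1) ^ (2 * r + 1) * e ^ k *
        ((k + (p - 1)).choose (2 * (p - 1)) : ZMod p) * (catalan (p - 1) : ZMod p) = 0 := by
    apply Finset.sum_eq_zero
    intro k hk
    rw [Finset.mem_range] at hk
    rw [Nat.choose_eq_zero_of_lt (by omega : k + (p - 1) < 2 * (p - 1))]
    push_cast
    ring
  rw [hzero, zero_add]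
  have e1 : (p - 1) + (p - 1) = 2 * (p - 1) := by ring
  rw [e1, Nat.choose_self]
  have e2 : (2 * ((p - 1 : ℕ) : ZMod p) + 1) = -1 := by
    push_cast [Nat.cast_sub hp0, ZMod.natCast_self]
    ring
  have e3 : e ^ (p - 1) = 1 := by
    obtain ⟨c, hc⟩ := hodd
    rw [show p - 1 = 2 * c by omega, pow_mul, he, one_pow]
  rw [e2, e3, catalan_pred_zmod hp hodd, Odd.neg_pow ⟨r, by ring⟩]
  push_cast
  ring

lemma choose_trinomial (k j : ℕ) (h : j ≤ k) :
    k.choose j * (k + j).choose j = (k + j).choose (2 * j) * (2 * j).choose j := by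
  have h1 : (k.choose j : ℚ) = k.factorial / (j.factorial * (k - j).factorial) :=
    Nat.cast_choose ℚ h
  have h2 : ((k + j).choose j : ℚ) = (k + j).factorial / (j.factorial * k.factorial) := by
    rw [Nat.cast_choose ℚ (by omega : j ≤ k + j), show k + j - j = k by omega]
  have h3 : ((k + j).choose (2 * j) : ℚ)
      = (k + j).factorial / ((2 * j).factorial * (k - j).factorial) := by
    rw [Nat.cast_choose ℚ (by omega : 2 * j ≤ k + j), show k + j - 2 * j = k - j by omega]
  have h4 : ((2 * j).choose j : ℚ) = (2 * j).factorial / (j.factorial * j.factorial) := by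
    rw [Nat.cast_choose ℚ (by omega : j ≤ 2 * j), show 2 * j - j = j by omega]
  have key : ((k.choose j * (k + j).choose j : ℕ) : ℚ)
      = (((k + j).choose (2 * j) * (2 * j).choose j : ℕ) : ℚ) := by
    push_cast
    rw [h1, h2, h3, h4]
    have f1 : (j.factorial : ℚ) ≠ 0 := Nat.cast_ne_zero.2 (Nat.factorial_ne_zero _)
    have f2 : ((k - j).factorial : ℚ) ≠ 0 := Nat.cast_ne_zero.2 (Nat.factorial_ne_zero _)
    have f3 : (k.factorial : ℚ) ≠ 0 := Nat.cast_ne_zero.2 (Nat.factorial_ne_zero _)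
    have f4 : ((2 * j).factorial : ℚ) ≠ 0 := Nat.cast_ne_zero.2 (Nat.factorial_ne_zero _)
    field_simp
  exact_mod_cast key

lemma schroeder_eq (k P : ℕ) (hk : k < P) :
    schroederNum k = ((∑ j ∈ Finset.range P, (k + j).choose (2 * j) * catalan j : ℕ) : ℚ) := by
  have hterm : ∀ j ∈ Finset.range (k + 1),
      (k.choose j : ℚ) * ((k + j).choose j : ℚ) / (j + 1)
        = (((k + j).choose (2 * j) * catalan j : ℕ) : ℚ) := by
    intro j hj
    rw [Finset.mem_range] at hj
    have hjk : j ≤ k := by omega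
    rw [div_eq_iff (by positivity : ((j : ℚ) + 1) ≠ 0)]
    have hnat : k.choose j * (k + j).choose j
        = ((k + j).choose (2 * j) * catalan j) * (j + 1) := by
      rw [choose_trinomial k j hjk]
      have : (j + 1) * catalan j = (2 * j).choose j := by
        rw [succ_mul_catalan_eq_centralBinom, Nat.centralBinom]
      rw [← this]
      ring
    have hc := congrArg (fun t : ℕ => (t : ℚ)) hnat
    push_cast at hc ⊢
    linear_combination hc
  rw [schroederNum, Finset.sum_congr rfl hterm]
  rw [Nat.cast_sum]
  apply Finset.sum_subset (Finset.range_subset_range.2 (by omega : k + 1 ≤ P))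
  intro j _ hj
  rw [Finset.mem_range, not_lt] at hj
  rw [Nat.choose_eq_zero_of_lt (by omega : k + j < 2 * j)]
  push_cast
  ring

theorem sum_odd_power_weight_schroederNum_congr (p : ℕ) (hp : p.Prime) (hodd : Odd p)
    (r : ℕ) (ε : ℚ) (hε : ε = 1 ∨ ε = -1) :
    ∃ m : ℤ,
      (∑ k ∈ Finset.range p, (2 * (k : ℚ) + 1) ^ (2 * r + 1) * ε ^ k * schroederNum k) - 1
        = (p : ℚ) * m := by
  haveI : Fact p.Prime := ⟨hp⟩
  obtain ⟨e, heq, he2⟩ : ∃ e : ℤ, ε = (e : ℚ) ∧ e ^ 2 = 1 := by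
    rcases hε with h | h
    · exact ⟨1, by simp [h], by ring⟩
    · exact ⟨-1, by simp [h], by ring⟩
  have hA : ∃ A : ℤ, ((∑ k ∈ Finset.range p, (2 * (k : ℚ) + 1) ^ (2 * r + 1) * ε ^ k *
        schroederNum k) = (A : ℚ)) ∧ ((A : ZMod p)) = 1 := by
    refine ⟨∑ k ∈ Finset.range p, (2 * (k : ℤ) + 1) ^ (2 * r + 1) * e ^ k *
      ((∑ j ∈ Finset.range p, (k + j).choose (2 * j) * catalan j : ℕ) : ℤ), ?_, ?_⟩
    · push_cast
      apply Finset.sum_congr rfl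
      intro k hk
      rw [Finset.mem_range] at hk
      rw [schroeder_eq k p hk, heq]
      push_cast
      ring
    · push_cast
      have he2' : (((e : ℤ) : ZMod p)) ^ 2 = 1 := by
        have : ((e : ℤ) : ZMod p) ^ 2 = (((e ^ 2 : ℤ) : ZMod p)) := by push_cast; ring
        rw [this, he2]
        push_cast
        ring
      have hm := main_zmod hp hodd r ((e : ℤ) : ZMod p) he2'
      refine Eq.trans ?_ hm
      apply Finset.sum_congr rfl
      intro k _
      ring
  obtain ⟨A, hQ, hZ⟩ := hA
  have hdvd : (p : ℤ) ∣ A - 1 := by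
    rw [← ZMod.intCast_zmod_eq_zero_iff_dvd]
    push_cast [hZ]
    ring
  obtain ⟨m, hm⟩ := hdvd
  refine ⟨m, ?_⟩
  rw [hQ]
  have := congrArg (fun t : ℤ => (t : ℚ)) hm
  push_cast at this
  linarith
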